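/- Let φ : ℝ → ℝ be continuous and let σ ∈ (0, π). Define g(t) = ∫_{−t}^{π−t} [(1/4) φ(cos θ) + (7/4) φ(−cos(θ+σ))] dθ. Then g is differentiable and g'(σ/2) = (3/2)[φ(−cos(σ/2)) − φ(cos(σ/2))]. Consequently, if t = σ/2 is a local minimizer of g, then φ(−cos(σ/2)) = φ(cos(σ/2)). -/

import Mathlib

open Real

/-- Derivative of the surrogate risk of the angle-t linear classifier for the
asymmetric circle distribution, and the induced first-order condition. -/
theorem stmt17 (φ : ℝ → ℝ) (hcont : Continuous φ) (σ : ℝ)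
    (hσ1 : 0 < σ) (hσ2 : σ < Real.pi) :
    let g : ℝ → ℝ := fun t => ∫ θ in (-t)..(Real.pi - t),
      ((1/4) * φ (Real.cos θ) + (7/4) * φ (-Real.cos (θ + σ)))
    HasDerivAt g ((3/2) * (φ (-Real.cos (σ/2)) - φ (Real.cos (σ/2)))) (σ/2) ∧
    (IsLocalMin g (σ/2) → φ (-Real.cos (σ/2)) = φ (Real.cos (σ/2))) := by
  intro g
  set F : ℝ → ℝ := fun θ => (1/4) * φ (Real.cos θ) + (7/4) * φ (-Real.cos (θ + σ)) with hFdef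
  have hF : Continuous F := by
    apply Continuous.add
    · exact continuous_const.mul (hcont.comp Real.continuous_cos)
    · exact continuous_const.mul (hcont.comp ((Real.continuous_cos.comp (continuous_id.add continuous_const)).neg))
  have hH : ∀ x : ℝ, HasDerivAt (fun y => ∫ θ in (0:ℝ)..y, F θ) (F x) x := fun x =>
    intervalIntegral.integral_hasDerivAt_right (hF.intervalIntegrable _ _)
      (hF.stronglyMeasurableAtFilter _ _) hF.continuousAt
  have hgeq : g = fun t => (∫ θ in (0:ℝ)..(Real.pi - t), F θ) - ∫ θ in (0:ℝ)..(-t), F θ := by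
    funext t
    have := intervalIntegral.integral_add_adjacent_intervals
      (a := -t) (b := 0) (c := Real.pi - t) (f := F) (μ := MeasureTheory.volume)
      (hF.intervalIntegrable _ _) (hF.intervalIntegrable _ _)
    have hsym : (∫ θ in (-t)..(0:ℝ), F θ) = - ∫ θ in (0:ℝ)..(-t), F θ :=
      intervalIntegral.integral_symm _ _
    show (∫ θ in (-t)..(Real.pi - t), F θ) = _
    rw [← this, hsym]; ring
  have hd1 : HasDerivAt (fun t : ℝ => ∫ θ in (0:ℝ)..(Real.pi - t), F θ)
      (F (Real.pi - σ/2) * (-1)) (σ/2) :=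
    (hH (Real.pi - σ/2)).comp _ ((hasDerivAt_id _).const_sub Real.pi)
  have hd2 : HasDerivAt (fun t : ℝ => ∫ θ in (0:ℝ)..(-t), F θ)
      (F (-(σ/2)) * (-1)) (σ/2) :=
    (hH (-(σ/2))).comp _ (hasDerivAt_neg _)
  have hderiv : HasDerivAt g (F (-(σ/2)) - F (Real.pi - σ/2)) (σ/2) := by
    rw [hgeq]
    have := hd1.sub hd2
    exact this.congr_deriv (by ring)
  have hval : F (-(σ/2)) - F (Real.pi - σ/2)
      = (3/2) * (φ (-Real.cos (σ/2)) - φ (Real.cos (σ/2))) := by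
    rw [hFdef]
    simp only []
    rw [show -(σ/2) + σ = σ/2 by ring, show Real.pi - σ/2 + σ = Real.pi + σ/2 by ring,
      Real.cos_neg, Real.cos_pi_sub, show Real.cos (Real.pi + σ/2) = -Real.cos (σ/2) by
        rw [Real.cos_add]; simp]
    ring_nf
  rw [hval] at hderiv
  refine ⟨hderiv, fun hmin => ?_⟩
  have := hmin.hasDerivAt_eq_zero hderiv
  have h32 : (3:ℝ)/2 ≠ 0 := by norm_num
  have := mul_eq_zero.mp this
  rcases this with h | h
  · exact absurd h h32
  · linarith
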